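/- Path-to-star identity for swap-invariant projectors: Let m_{(a,b)} denote operators on a tensor product Hilbert space ⊗_{v} ℋ_v, acting nontrivially only on factors a and b, such that m_{(a,b)} · SWAP_{(a,b)} = SWAP_{(a,b)} · m_{(a,b)} = m_{(a,b)}, where SWAP_{(a,b)} exchanges tensor factors a and b. Then for vertices v₁,…,v_p, the sequential path product satisfies m_{(v₁,v₂)} m_{(v₂,v₃)} ⋯ m_{(v_{p−1},v_p)} = m_{(v₁,v₂)} m_{(v₁,v₃)} ⋯ m_{(v₁,v_p)} · W, where W is the cyclic permutation operator on the factors v₁,…,v_p sending v₁ → v_p, v₂ → v₁, …, v_p → v_{p−1}. -/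

import Mathlib

/-- The operator on `⊗_{u ∈ V} ℂ^d` (identified with functions `(V → Fin d) → ℂ`) acting
nontrivially only on the sites `v, w`, with two-site kernel `Q`. -/
noncomputable def localOp {V : Type} [Fintype V] [DecidableEq V] (d : ℕ) (v w : V)
    (Q : Matrix (Fin d × Fin d) (Fin d × Fin d) ℂ) : Matrix (V → Fin d) (V → Fin d) ℂ :=
  fun x y => if ∀ u, u ≠ v → u ≠ w → x u = y u then Q (x v, x w) (y v, y w) else 0

/-- The unitary permuting the tensor factors of `⊗_{u ∈ V} ℂ^d` according to a permutation
`σ` of the sites. -/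
noncomputable def permMatrix {V : Type} [Fintype V] [DecidableEq V] (d : ℕ)
    (σ : Equiv.Perm V) : Matrix (V → Fin d) (V → Fin d) ℂ :=
  fun x y => if x = y ∘ σ then 1 else 0

variable {V : Type} [Fintype V] [DecidableEq V] {d : ℕ}

lemma permMatrix_mul (σ τ : Equiv.Perm V) :
    permMatrix d σ * permMatrix d τ = permMatrix d (τ * σ) := by
  ext x y
  rw [Matrix.mul_apply, Finset.sum_eq_single (y ∘ τ)]
  · simp [permMatrix, Function.comp_assoc]
    exact if_congr Iff.rfl rfl rfl
  · intro z _ hz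
    simp [permMatrix, hz]
  · simp [permMatrix]

lemma localOp_mul_perm (a b : V) (Q : Matrix (Fin d × Fin d) (Fin d × Fin d) ℂ)
    (σ : Equiv.Perm V) :
    localOp d a b Q * permMatrix d σ = permMatrix d σ * localOp d (σ a) (σ b) Q := by
  ext x y
  rw [Matrix.mul_apply, Matrix.mul_apply, Finset.sum_eq_single (y ∘ σ),
    Finset.sum_eq_single (x ∘ σ.symm)]
  · have h1 : (x ∘ ⇑σ.symm) ∘ ⇑σ = x := by funext u; simp
    simp only [permMatrix, if_pos rfl, h1, if_true, mul_one, one_mul]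
    simp only [localOp, Function.comp_apply, Equiv.symm_apply_apply]
    congr 1
    simp only [eq_iff_iff]
    constructor
    · intro h u hu1 hu2
      have := h (σ.symm u) (fun e => hu1 (by rw [← e]; simp)) (fun e => hu2 (by rw [← e]; simp))
      simpa using this
    · intro h u hu1 hu2
      have := h (σ u) (fun e => hu1 (σ.injective e)) (fun e => hu2 (σ.injective e))
      simpa using this
  · intro z _ hz
    simp only [permMatrix]
    rw [if_neg, zero_mul]
    intro h
    exact hz (by funext u; rw [h]; simp)
  · intro h
    exact absurd (Finset.mem_univ _) h
  · intro z _ hz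
    simp [permMatrix, hz]
  · intro h
    exact absurd (Finset.mem_univ _) h

lemma star_comm (σ : Equiv.Perm V) {n : ℕ} (a : V) (f : Fin n → V)
    (Q : Matrix (Fin d × Fin d) (Fin d × Fin d) ℂ) :
    (List.ofFn fun i => localOp d a (f i) Q).prod * permMatrix d σ
      = permMatrix d σ * (List.ofFn fun i => localOp d (σ a) (σ (f i)) Q).prod := by
  induction n with
  | zero => simp [permMatrix]
  | succ n ih =>
    rw [List.ofFn_succ, List.ofFn_succ, List.prod_cons, List.prod_cons, mul_assoc,
      ih (fun i => f i.succ), ← mul_assoc, localOp_mul_perm, mul_assoc]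

/-- Path-to-star identity for swap-invariant two-site operators: if the two-site operator
`m_{(a,b)} = localOp d a b Q` satisfies `m·SWAP = SWAP·m = m`, then for distinct vertices
`v₀, …, v_{p+1}` the sequential path product `m_{(v₀,v₁)} m_{(v₁,v₂)} ⋯ m_{(v_p,v_{p+1})}`
equals the star product `m_{(v₀,v₁)} m_{(v₀,v₂)} ⋯ m_{(v₀,v_{p+1})}` times the cyclic
permutation operator `W` sending `v₀ → v_{p+1}` and `v_i → v_{i−1}`. -/
theorem stmt16 {V : Type} [Fintype V] [DecidableEq V] (d p : ℕ)
    (Q : Matrix (Fin d × Fin d) (Fin d × Fin d) ℂ)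
    (hswap : ∀ a b : V, a ≠ b →
      localOp d a b Q * permMatrix d (Equiv.swap a b) = localOp d a b Q ∧
      permMatrix d (Equiv.swap a b) * localOp d a b Q = localOp d a b Q)
    (v : Fin (p + 2) → V) (hv : Function.Injective v) :
    (List.ofFn fun i : Fin (p + 1) => localOp d (v i.castSucc) (v i.succ) Q).prod
      = (List.ofFn fun i : Fin (p + 1) => localOp d (v 0) (v i.succ) Q).prod
        * permMatrix d ((List.ofFn v).reverse.formPerm) := by
  induction p with
  | zero =>
    have h01 : v 0 ≠ v 1 := fun h => absurd (hv h) (by simp [Fin.ext_iff])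
    have hl : (List.ofFn v) = [v 0, v 1] := by
      simp [List.ofFn_succ]
    rw [hl]
    simp only [List.reverse_cons, List.reverse_nil, List.nil_append, List.cons_append,
      List.formPerm_cons_cons, List.formPerm_singleton, mul_one]
    have h1 : (List.ofFn fun i : Fin 1 => localOp d (v i.castSucc) (v i.succ) Q)
        = [localOp d (v 0) (v 1) Q] := by
      simp [List.ofFn_succ]
    have h2 : (List.ofFn fun i : Fin 1 => localOp d (v 0) (v i.succ) Q)
        = [localOp d (v 0) (v 1) Q] := by
      simp [List.ofFn_succ]
    rw [Equiv.swap_comm (v 1) (v 0), h1, h2]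
    simp only [List.prod_singleton]
    exact ((hswap (v 0) (v 1) h01).1).symm
  | succ p ih =>
    set σ : Equiv.Perm V := Equiv.swap (v 0) (v 1) with hσ
    have h01 : v 0 ≠ v 1 := fun h => absurd (hv h) (by simp [Fin.ext_iff])
    have hv' : Function.Injective (v ∘ Fin.succ) := hv.comp (Fin.succ_injective _)
    have IH := ih (v ∘ Fin.succ) hv'
    -- rewrite LHS head/tail
    rw [List.ofFn_succ, List.prod_cons]
    have htail : (List.ofFn fun i : Fin (p+1) =>
        localOp d (v ((i.succ : Fin (p+2)).castSucc)) (v i.succ.succ) Q)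
        = (List.ofFn fun i : Fin (p+1) =>
            localOp d ((v ∘ Fin.succ) i.castSucc) ((v ∘ Fin.succ) i.succ) Q) := by
      simp only [Function.comp_apply, Fin.succ_castSucc]
    rw [htail, IH, ← mul_assoc]
    simp only [Function.comp_apply, Fin.castSucc_zero, Fin.succ_zero_eq_one]
    -- facts
    have hfix : ∀ i : Fin (p+1), σ (v i.succ.succ) = v i.succ.succ := by
      intro i
      apply Equiv.swap_apply_of_ne_of_ne
      · exact fun h => absurd (hv h) (Fin.succ_ne_zero _)
      · exact fun h => absurd (hv h) (by
          rw [← Fin.succ_zero_eq_one]; exact fun h' => Fin.succ_ne_zero _ (Fin.succ_injective _ h'))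
    have hsc := star_comm σ (v 0) (fun i : Fin (p+1) => v i.succ.succ) Q
    rw [hσ] at hsc
    simp only [Equiv.swap_apply_left] at hsc
    rw [← hσ] at hsc
    simp only [hfix] at hsc
    -- hsc : star₀ * Pσ = Pσ * star'
    have hW : permMatrix d (List.ofFn v).reverse.formPerm
        = permMatrix d σ * permMatrix d (List.ofFn (v ∘ Fin.succ)).reverse.formPerm := by
      rw [permMatrix_mul]
      rw [List.formPerm_reverse, List.formPerm_reverse, List.ofFn_succ (f := v)]
      have h2 : (List.ofFn fun i : Fin (p+2) => v i.succ)
          = v 1 :: List.ofFn (fun i : Fin (p+1) => v i.succ.succ) := by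
        rw [List.ofFn_succ]
        simp [Fin.succ_zero_eq_one]
      have h2' : List.ofFn (v ∘ Fin.succ)
          = v 1 :: List.ofFn (fun i : Fin (p+1) => v i.succ.succ) := by
        rw [show List.ofFn (v ∘ Fin.succ) = (List.ofFn fun i : Fin (p+2) => v i.succ) from rfl, h2]
      rw [h2, h2', List.formPerm_cons_cons, mul_inv_rev, hσ, Equiv.swap_inv]
    have hstar : (List.ofFn fun i : Fin (p+2) => localOp d (v 0) (v i.succ) Q).prod
        = localOp d (v 0) (v 1) Q *
          (List.ofFn fun i : Fin (p+1) => localOp d (v 0) (v i.succ.succ) Q).prod := by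
      rw [List.ofFn_succ, List.prod_cons, Fin.succ_zero_eq_one]
    rw [hW, hstar]
    have key : localOp d (v 0) (v 1) Q *
        (List.ofFn fun i : Fin (p+1) => localOp d (v 1) (v i.succ.succ) Q).prod
        = (localOp d (v 0) (v 1) Q *
            (List.ofFn fun i : Fin (p+1) => localOp d (v 0) (v i.succ.succ) Q).prod)
          * permMatrix d σ := by
      conv_lhs => rw [← (hswap (v 0) (v 1) h01).1]
      rw [← hσ, mul_assoc, mul_assoc]
      congr 1
      exact hsc.symm
    rw [key, mul_assoc, mul_assoc]
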